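/- For every real N > 0 there exist nonnegative reals (λ_k)_{k∈ℕ} with Σ_k λ_k < ∞ and functions (ψ_k)_{k∈ℕ} from [0,N] to ℝ that are linearly independent and uniformly bounded in sup norm (there exists M < ∞ with |ψ_k(x)| ≤ M for all k and all x ∈ [0,N]), such that for all x, t ∈ [0,N] the series Σ_k λ_k ψ_k(x) ψ_k(t) converges to exp(−(x−t)²). In other words, on any bounded domain the Gaussian kernel admits a (1,∞)-expansion. -/

import Mathlib

/-- On any bounded domain `[0, N]`, the Gaussian kernel `exp (-(x-t)^2)` admits a
`(1, ∞)`-expansion: nonnegative summable weights `lam` and linearly independent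
basis functions `ψ` uniformly bounded in sup norm. -/
theorem gaussian_one_infty_expansion_bounded_domain (N : ℝ) (hN : 0 < N) :
    ∃ (lam : ℕ → ℝ) (ψ : ℕ → Set.Icc (0 : ℝ) N → ℝ),
      (∀ k, 0 ≤ lam k) ∧
      Summable lam ∧
      LinearIndependent ℝ ψ ∧
      (∃ M : ℝ, ∀ (k : ℕ) (x : Set.Icc (0 : ℝ) N), |ψ k x| ≤ M) ∧
      ∀ x t : Set.Icc (0 : ℝ) N,
        HasSum (fun k : ℕ => lam k * ψ k x * ψ k t)
          (Real.exp (-((x : ℝ) - (t : ℝ)) ^ 2)) := by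
  have hN0 : (N : ℝ) ≠ 0 := ne_of_gt hN
  set lam : ℕ → ℝ := fun k => (2 * N ^ 2) ^ k / (Nat.factorial k : ℝ) with hlam
  set ψ : ℕ → Set.Icc (0 : ℝ) N → ℝ :=
    fun k x => ((x : ℝ) / N) ^ k * Real.exp (-(x : ℝ) ^ 2) with hψ
  refine ⟨lam, ψ, ?_, ?_, ?_, ?_, ?_⟩
  · intro k
    apply div_nonneg (pow_nonneg (by positivity) k) (by positivity)
  · exact Real.summable_pow_div_factorial _
  · -- linear independence
    let L : Polynomial ℝ →ₗ[ℝ] (Set.Icc (0 : ℝ) N → ℝ) :=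
      { toFun := fun p x => Polynomial.eval ((x : ℝ) / N) p * Real.exp (-(x : ℝ) ^ 2)
        map_add' := by intro p q; funext x; simp [add_mul]
        map_smul' := by intro c p; funext x; simp [mul_assoc] }
    have hker : LinearMap.ker L = ⊥ := by
      rw [LinearMap.ker_eq_bot']
      intro p hp
      apply Polynomial.eq_zero_of_infinite_isRoot
      have hsub : (fun y : ℝ => y / N) '' (Set.Icc (0 : ℝ) N) ⊆ {x | p.IsRoot x} := by
        rintro _ ⟨y, hy, rfl⟩
        have := congrFun hp ⟨y, hy⟩
        simp only [Pi.zero_apply] at this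
        have hexp : Real.exp (-(y : ℝ) ^ 2) ≠ 0 := Real.exp_ne_zero _
        exact (mul_eq_zero.1 this).resolve_right hexp
      refine Set.Infinite.mono hsub ?_
      apply Set.Infinite.image
      · intro a _ b _ hab
        field_simp at hab
        exact hab
      · exact Set.infinite_coe_iff.1 (Set.Icc.infinite hN)
    have hXpow : LinearIndependent ℝ (fun k : ℕ => (Polynomial.X : Polynomial ℝ) ^ k) := by
      have := (Polynomial.basisMonomials ℝ).linearIndependent
      simpa [Polynomial.X_pow_eq_monomial, Polynomial.coe_basisMonomials] using this
    have := hXpow.map' L hker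
    suffices hs : ψ = ⇑L ∘ (fun k : ℕ => (Polynomial.X : Polynomial ℝ) ^ k) by rw [hs]; exact this
    funext k
    funext x
    simp [ψ, L, div_pow]
  · refine ⟨1, fun k x => ?_⟩
    rw [abs_mul]
    have hx0 := x.2.1
    have hxN := x.2.2
    have h1 : |((x : ℝ) / N) ^ k| ≤ 1 := by
      rw [abs_pow]
      apply pow_le_one₀ (abs_nonneg _)
      rw [abs_div, abs_of_nonneg hx0, abs_of_pos hN]
      exact div_le_one_of_le₀ hxN (le_of_lt hN)
    have h2 : |Real.exp (-(x : ℝ) ^ 2)| ≤ 1 := by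
      rw [abs_of_pos (Real.exp_pos _)]
      exact Real.exp_le_one_iff.2 (neg_nonpos.2 (sq_nonneg _))
    calc |((x : ℝ) / N) ^ k| * |Real.exp (-(x : ℝ) ^ 2)| ≤ 1 * 1 :=
          mul_le_mul h1 h2 (abs_nonneg _) zero_le_one
      _ = 1 := by ring
  · intro x t
    have key : HasSum (fun k : ℕ => (2 * (x : ℝ) * t) ^ k / (Nat.factorial k : ℝ))
        (Real.exp (2 * (x : ℝ) * t)) := by
      rw [Real.exp_eq_exp_ℝ]
      exact NormedSpace.expSeries_div_hasSum_exp _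
    have H := key.mul_right (Real.exp (-(x : ℝ) ^ 2) * Real.exp (-(t : ℝ) ^ 2))
    have hfun : (fun k : ℕ => lam k * ψ k x * ψ k t) =
        fun k : ℕ => (2 * (x : ℝ) * t) ^ k / (Nat.factorial k : ℝ) *
          (Real.exp (-(x : ℝ) ^ 2) * Real.exp (-(t : ℝ) ^ 2)) := by
      funext k
      simp only [hlam, hψ]
      field_simp
      have hNk : N ^ (k * 2) * N⁻¹ ^ (k * 2) = 1 := by rw [← mul_pow, mul_inv_cancel₀ hN0, one_pow]
      linear_combination ((x : ℝ) ^ k * (t : ℝ) ^ k * 2 ^ k) * hNk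
    have hval : Real.exp (2 * (x : ℝ) * t) *
        (Real.exp (-(x : ℝ) ^ 2) * Real.exp (-(t : ℝ) ^ 2)) =
        Real.exp (-((x : ℝ) - (t : ℝ)) ^ 2) := by
      rw [← Real.exp_add, ← Real.exp_add]
      congr 1
      ring
    rw [hfun, ← hval]
    exact H
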